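/- If the counterfactual outcome Y_x is conditionally independent of X given Z, then the ETT is a mixture of z-specific total effects: ETT_{x0,x1}(y|x) = Σ_z z-TE_{x0,x1}(y|z) P(z|x); consequently, vanishing of all z-specific total effects implies vanishing of the ETT for every x. -/

import Mathlib

open MeasureTheory ProbabilityTheory

lemma cond_mixture_aux {Ω SX SZ : Type*} [MeasurableSpace Ω]
    [Fintype SX] [Fintype SZ]
    (μ : Measure Ω) [IsProbabilityMeasure μ]
    (X : Ω → SX) (Z : Ω → SZ)
    (hXmeas : ∀ x : SX, MeasurableSet (X ⁻¹' {x}))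
    (hZmeas : ∀ z : SZ, MeasurableSet (Z ⁻¹' {z}))
    (Y : Set Ω) (hY : MeasurableSet Y)
    (hpos : ∀ (x : SX) (z : SZ), 0 < μ (X ⁻¹' {x} ∩ Z ⁻¹' {z}))
    (hCI : ∀ (x : SX) (z : SZ),
      ProbabilityTheory.cond μ (X ⁻¹' {x} ∩ Z ⁻¹' {z}) Y
        = ProbabilityTheory.cond μ (Z ⁻¹' {z}) Y)
    (x : SX) :
    (ProbabilityTheory.cond μ (X ⁻¹' {x}) Y).toReal
      = ∑ z : SZ, (ProbabilityTheory.cond μ (Z ⁻¹' {z}) Y).toReal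
          * (ProbabilityTheory.cond μ (X ⁻¹' {x}) (Z ⁻¹' {z})).toReal := by
  set A := X ⁻¹' {x} with hA
  -- Ω nonempty, hence SZ nonempty
  have hΩ : Nonempty Ω := by
    by_contra h
    rw [not_nonempty_iff] at h
    have := measure_univ (μ := μ)
    rw [Set.univ_eq_empty_iff.mpr h] at this
    simp at this
  have hSZ : Nonempty SZ := ⟨Z (Classical.arbitrary Ω)⟩
  obtain ⟨z0⟩ := hSZ
  have hApos : μ A ≠ 0 := by
    intro h
    have h2 := hpos x z0
    have : μ (A ∩ Z ⁻¹' {z0}) ≤ μ A := measure_mono Set.inter_subset_left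
    rw [h] at this
    exact absurd (le_antisymm this zero_le) (ne_of_gt h2)
  have hAfin : μ A ≠ ⊤ := measure_ne_top μ A
  have hazfin : ∀ z, μ (A ∩ Z ⁻¹' {z}) ≠ ⊤ := fun z => measure_ne_top _ _
  have haznz : ∀ z, μ (A ∩ Z ⁻¹' {z}) ≠ 0 := fun z => (hpos x z).ne'
  have hAZmeas : ∀ z, MeasurableSet (A ∩ Z ⁻¹' {z}) :=
    fun z => (hXmeas x).inter (hZmeas z)
  -- decomposition of μ (A ∩ Y)
  have hdis : Pairwise (Function.onFun Disjoint (fun z => A ∩ Z ⁻¹' {z} ∩ Y)) := by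
    intro z1 z2 hz
    refine Set.disjoint_left.mpr ?_
    rintro ω ⟨⟨_, hz1⟩, _⟩ ⟨⟨_, hz2⟩, _⟩
    exact hz (hz1.symm.trans hz2)
  have hunion : A ∩ Y = ⋃ z, (A ∩ Z ⁻¹' {z} ∩ Y) := by
    ext ω
    simp only [Set.mem_inter_iff, Set.mem_iUnion, Set.mem_preimage,
      Set.mem_singleton_iff]
    constructor
    · rintro ⟨hA, hY⟩; exact ⟨Z ω, ⟨hA, rfl⟩, hY⟩
    · rintro ⟨z, ⟨hA, _⟩, hY⟩; exact ⟨hA, hY⟩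
  have hdecomp : μ (A ∩ Y) = ∑ z : SZ, μ (A ∩ Z ⁻¹' {z} ∩ Y) := by
    rw [hunion, measure_iUnion hdis (fun z => (hAZmeas z).inter hY),
      tsum_fintype]
  -- rewrite conds
  have hcondA : ProbabilityTheory.cond μ A Y = (μ A)⁻¹ * μ (A ∩ Y) :=
    ProbabilityTheory.cond_apply (hXmeas x) μ Y
  have hcondZ : ∀ z, ProbabilityTheory.cond μ (Z ⁻¹' {z}) Y
      = (μ (A ∩ Z ⁻¹' {z}))⁻¹ * μ (A ∩ Z ⁻¹' {z} ∩ Y) := by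
    intro z
    rw [← hCI x z, ProbabilityTheory.cond_apply (hAZmeas z) μ Y]
  have hcondAZ : ∀ z, ProbabilityTheory.cond μ A (Z ⁻¹' {z})
      = (μ A)⁻¹ * μ (A ∩ Z ⁻¹' {z}) :=
    fun z => ProbabilityTheory.cond_apply (hXmeas x) μ _
  rw [hcondA]
  simp only [hcondZ, hcondAZ]
  rw [ENNReal.toReal_mul, hdecomp, ENNReal.toReal_sum
    (fun z _ => ne_top_of_le_ne_top (hazfin z) (measure_mono Set.inter_subset_left)),
    Finset.mul_sum]
  refine Finset.sum_congr rfl fun z _ => ?_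
  rw [ENNReal.toReal_mul, ENNReal.toReal_mul, ENNReal.toReal_inv, ENNReal.toReal_inv]
  have h1 : (μ (A ∩ Z ⁻¹' {z})).toReal ≠ 0 :=
    ENNReal.toReal_ne_zero.mpr ⟨haznz z, hazfin z⟩
  field_simp

/-- If the counterfactual outcomes `Y_{x0}, Y_{x1}` are conditionally
independent of `X` given `Z` (expressed via equality of conditional
probabilities), then the ETT is a mixture of `z`-specific total effects:
`ETT_{x0,x1}(y|x) = Σ_z z-TE_{x0,x1}(y|z) P(Z=z|X=x)`; consequently, if all
`z`-specific total effects vanish then the ETT vanishes for every `x`. -/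
theorem ett_mixture_of_zte {Ω SX SZ : Type*} [MeasurableSpace Ω]
    [Fintype SX] [Fintype SZ]
    (μ : Measure Ω) [IsProbabilityMeasure μ]
    (X : Ω → SX) (Z : Ω → SZ)
    (hXmeas : ∀ x : SX, MeasurableSet (X ⁻¹' {x}))
    (hZmeas : ∀ z : SZ, MeasurableSet (Z ⁻¹' {z}))
    (Yx0 Yx1 : Set Ω) (hY0 : MeasurableSet Yx0) (hY1 : MeasurableSet Yx1)
    (hpos : ∀ (x : SX) (z : SZ), 0 < μ (X ⁻¹' {x} ∩ Z ⁻¹' {z}))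
    -- conditional independence of the potential outcomes and X given Z:
    (hCI0 : ∀ (x : SX) (z : SZ),
      ProbabilityTheory.cond μ (X ⁻¹' {x} ∩ Z ⁻¹' {z}) Yx0
        = ProbabilityTheory.cond μ (Z ⁻¹' {z}) Yx0)
    (hCI1 : ∀ (x : SX) (z : SZ),
      ProbabilityTheory.cond μ (X ⁻¹' {x} ∩ Z ⁻¹' {z}) Yx1
        = ProbabilityTheory.cond μ (Z ⁻¹' {z}) Yx1)
    (zTE : SZ → ℝ)
    (hzTE : ∀ z, zTE z = (ProbabilityTheory.cond μ (Z ⁻¹' {z}) Yx1).toReal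
        - (ProbabilityTheory.cond μ (Z ⁻¹' {z}) Yx0).toReal)
    (ETT : SX → ℝ)
    (hETT : ∀ x, ETT x = (ProbabilityTheory.cond μ (X ⁻¹' {x}) Yx1).toReal
        - (ProbabilityTheory.cond μ (X ⁻¹' {x}) Yx0).toReal) :
    (∀ x : SX, ETT x = ∑ z : SZ,
        zTE z * (ProbabilityTheory.cond μ (X ⁻¹' {x}) (Z ⁻¹' {z})).toReal)
      ∧ ((∀ z : SZ, zTE z = 0) → ∀ x : SX, ETT x = 0) := by
  have hmix : ∀ x : SX, ETT x = ∑ z : SZ,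
      zTE z * (ProbabilityTheory.cond μ (X ⁻¹' {x}) (Z ⁻¹' {z})).toReal := by
    intro x
    rw [hETT x,
      cond_mixture_aux μ X Z hXmeas hZmeas Yx1 hY1 hpos hCI1 x,
      cond_mixture_aux μ X Z hXmeas hZmeas Yx0 hY0 hpos hCI0 x,
      ← Finset.sum_sub_distrib]
    refine Finset.sum_congr rfl fun z _ => ?_
    rw [hzTE z]
    ring
  exact ⟨hmix, fun hz x => by simp [hmix x, hz]⟩
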